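/- Let r ≥ 1 and s ≥ 0 be natural numbers, let h : Fin r → ℕ with h(i) ≥ 1 for all i, and set N = Σ_i h(i). Partition the indices 0, 1, …, N−1 into r consecutive blocks B_1, …, B_r of sizes h(1), …, h(r). Let M be the (N+1) × (N+1) integer matrix defined by: for p, q < N lying in the same block, M[p][q] = 1 if q ≤ p and 0 if q > p; for p, q < N in different blocks, M[p][q] = 0; M[p][N] = 1 for every p < N; M[N][q] = −1 for every q < N; and M[N][N] = s + 1. Then det(M) = r + s + 1. -/

import Mathlib

/-- Indices `p` and `q` lie in the same block of the partition of `{0, …, N-1}` into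
`r` consecutive blocks of sizes `h 0, …, h (r-1)`. -/
def sameBlock {r : ℕ} (h : Fin r → ℕ) (p q : ℕ) : Prop :=
  ∃ i : Fin r,
    (∑ i' ∈ Finset.univ.filter (fun i' : Fin r => i' < i), h i') ≤ p ∧
    p < (∑ i' ∈ Finset.univ.filter (fun i' : Fin r => i' < i), h i') + h i ∧
    (∑ i' ∈ Finset.univ.filter (fun i' : Fin r => i' < i), h i') ≤ q ∧
    q < (∑ i' ∈ Finset.univ.filter (fun i' : Fin r => i' < i), h i') + h i

open scoped Classical in
/-- The `(N+1) × (N+1)` integer matrix with diagonal blocks `L_{h i}` (lower-triangular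
all-ones) in the first `N` rows/columns, last column all `1`'s above the corner, last row
all `-1`'s left of the corner, and corner entry `s + 1`. -/
noncomputable def starMatrix (r s N : ℕ) (h : Fin r → ℕ) :
    Matrix (Fin (N + 1)) (Fin (N + 1)) ℤ :=
  Matrix.of fun p q =>
    if (p : ℕ) < N then
      if (q : ℕ) < N then
        if sameBlock h (p : ℕ) (q : ℕ) ∧ (q : ℕ) ≤ (p : ℕ) then 1 else 0
      else 1
    else
      if (q : ℕ) < N then -1 else (s : ℤ) + 1

/-! ### Auxiliary definitions -/

/-- Partial sums of the block sizes, as a function on `ℕ`. -/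
def pS {r : ℕ} (h : Fin r → ℕ) (n : ℕ) : ℕ :=
  ∑ k ∈ Finset.range n, if hk : k < r then h ⟨k, hk⟩ else 0

lemma pS_succ {r : ℕ} (h : Fin r → ℕ) {k : ℕ} (hk : k < r) :
    pS h (k + 1) = pS h k + h ⟨k, hk⟩ := by
  simp [pS, Finset.sum_range_succ, hk]

lemma pS_mono {r : ℕ} (h : Fin r → ℕ) : Monotone (pS h) := by
  intro a b hab
  exact Finset.sum_le_sum_of_subset (Finset.range_subset_range.2 hab)

lemma pS_strict {r : ℕ} (h : Fin r → ℕ) (hh : ∀ i, 1 ≤ h i) {k j : ℕ} (hk : k < r)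
    (hkj : k < j) : pS h k < pS h j := by
  have h1 : pS h k < pS h (k + 1) := by
    rw [pS_succ h hk]
    have := hh ⟨k, hk⟩
    omega
  exact lt_of_lt_of_le h1 (pS_mono h hkj)

lemma pS_filter {r : ℕ} (h : Fin r → ℕ) (i : Fin r) :
    (∑ i' ∈ Finset.univ.filter (fun i' : Fin r => i' < i), h i') = pS h i.val := by
  unfold pS
  refine Finset.sum_bij' (fun a _ => (a : ℕ)) (fun k hk => ⟨k, by
    simp only [Finset.mem_range] at hk
    exact lt_trans hk i.isLt⟩) ?_ ?_ ?_ ?_ ?_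
  · intro a ha
    simp only [Finset.mem_filter, Finset.mem_univ, true_and, Fin.lt_def] at ha
    simpa using ha
  · intro k hk
    simp only [Finset.mem_range] at hk
    simp only [Finset.mem_filter, Finset.mem_univ, true_and, Fin.lt_def]
    exact hk
  · intro a _; rfl
  · intro k _; rfl
  · intro a _
    rw [dif_pos a.isLt]

lemma pS_top {r : ℕ} (h : Fin r → ℕ) : pS h r = ∑ i, h i := by
  unfold pS
  rw [Finset.sum_range fun k => if hk : k < r then h ⟨k, hk⟩ else 0]
  apply Finset.sum_congr rfl
  intro i _
  simp [i.isLt]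

/-- Characterization of `sameBlock` in terms of partial sums. -/
lemma sameBlock_iff {r : ℕ} (h : Fin r → ℕ) (p q : ℕ) :
    sameBlock h p q ↔ ∃ k, ∃ hk : k < r,
      pS h k ≤ p ∧ p < pS h k + h ⟨k, hk⟩ ∧ pS h k ≤ q ∧ q < pS h k + h ⟨k, hk⟩ := by
  constructor
  · rintro ⟨i, h1, h2, h3, h4⟩
    exact ⟨i.val, i.isLt, by rwa [← pS_filter], by rwa [← pS_filter],
      by rwa [← pS_filter], by rwa [← pS_filter]⟩
  · rintro ⟨k, hk, h1, h2, h3, h4⟩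
    exact ⟨⟨k, hk⟩, by rwa [pS_filter], by rwa [pS_filter],
      by rwa [pS_filter], by rwa [pS_filter]⟩

/-- Every `p < pS h r` lies in some block. -/
lemma exists_block {r : ℕ} (h : Fin r → ℕ) (hr : 1 ≤ r) {p : ℕ} (hp : p < pS h r) :
    ∃ k, k < r ∧ pS h k ≤ p ∧ p < pS h (k + 1) := by
  have hex : ∃ k, p < pS h (k + 1) := ⟨r - 1, by
    have : r - 1 + 1 = r := by omega
    rwa [this]⟩
  refine ⟨Nat.find hex, ?_, ?_, Nat.find_spec hex⟩
  · have : Nat.find hex ≤ r - 1 := Nat.find_min' hex (by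
      have : r - 1 + 1 = r := by omega
      rwa [this])
    omega
  · rcases Nat.eq_zero_or_pos (Nat.find hex) with h0 | h0
    · rw [h0]; simp [pS]
    · have := Nat.find_min hex (show Nat.find hex - 1 < Nat.find hex by omega)
      have heq : Nat.find hex - 1 + 1 = Nat.find hex := by omega
      rw [heq] at this
      omega

lemma block_unique {r : ℕ} (h : Fin r → ℕ) (hh : ∀ i, 1 ≤ h i) {p k j : ℕ}
    (hk : k < r) (hj : j < r) (h1 : pS h k ≤ p) (h2 : p < pS h (k + 1))
    (h3 : pS h j ≤ p) (h4 : p < pS h (j + 1)) : k = j := by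
  rcases lt_trichotomy k j with hlt | heq | hgt
  · exfalso
    have : pS h (k + 1) ≤ pS h j := pS_mono h hlt
    omega
  · exact heq
  · exfalso
    have : pS h (j + 1) ≤ pS h k := pS_mono h hgt
    omega

/-- `t` is the first index of some block. -/
def isStart {r : ℕ} (h : Fin r → ℕ) (t : ℕ) : Prop := ∃ k, k < r ∧ t = pS h k

open scoped Classical in
/-- Lower-triangular factor. -/
noncomputable def lowerFac (r N : ℕ) (h : Fin r → ℕ) :
    Matrix (Fin (N + 1)) (Fin (N + 1)) ℤ :=
  Matrix.of fun p q =>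
    if (p : ℕ) < N then
      if (q : ℕ) < N then
        if sameBlock h (p : ℕ) (q : ℕ) ∧ (q : ℕ) ≤ (p : ℕ) then 1 else 0
      else 0
    else
      if (q : ℕ) < N then -1 else 1

open scoped Classical in
/-- Upper-triangular factor. -/
noncomputable def upperFac (r s N : ℕ) (h : Fin r → ℕ) :
    Matrix (Fin (N + 1)) (Fin (N + 1)) ℤ :=
  Matrix.of fun p q =>
    if (p : ℕ) < N then
      if (q : ℕ) < N then
        if (p : ℕ) = (q : ℕ) then 1 else 0
      else if isStart h (p : ℕ) then 1 else 0
    else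
      if (q : ℕ) < N then 0 else (r : ℤ) + s + 1

theorem starMatrix_det (r s : ℕ) (hr : 1 ≤ r) (h : Fin r → ℕ) (hh : ∀ i, 1 ≤ h i)
    (N : ℕ) (hN : N = ∑ i, h i) :
    (starMatrix r s N h).det = (r : ℤ) + s + 1 := by
  classical
  have hpSr : pS h r = N := by rw [pS_top, hN]
  -- same block reflexivity for p < N
  have hself : ∀ p : ℕ, p < N → sameBlock h p p := by
    intro p hp
    obtain ⟨k, hk, h1, h2⟩ := exists_block h hr (by rwa [hpSr])
    rw [pS_succ h hk] at h2
    exact (sameBlock_iff h p p).2 ⟨k, hk, h1, h2, h1, h2⟩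
  -- factorization
  have hfac : starMatrix r s N h = lowerFac r N h * upperFac r s N h := by
    ext p q
    rw [Matrix.mul_apply, Fin.sum_univ_castSucc]
    by_cases hp : (p : ℕ) < N
    · by_cases hq : (q : ℕ) < N
      · -- top-left block
        have hlast : ((Fin.last N : Fin (N + 1)) : ℕ) = N := rfl
        rw [show (lowerFac r N h p (Fin.last N)) = 0 by simp [lowerFac, hlast, hp]]
        rw [zero_mul, add_zero]
        rw [Finset.sum_eq_single (⟨(q : ℕ), hq⟩ : Fin N)]
        · have hcast : ((Fin.castSucc ⟨(q : ℕ), hq⟩ : Fin (N + 1)) : ℕ) = (q : ℕ) := rfl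
          simp only [starMatrix, lowerFac, upperFac, Matrix.of_apply, hcast, hp, hq,
            if_true, if_pos]
          simp
        · intro t _ ht
          have htc : ((Fin.castSucc t : Fin (N + 1)) : ℕ) = (t : ℕ) := rfl
          have htN : (t : ℕ) < N := t.isLt
          have hne : (t : ℕ) ≠ (q : ℕ) := by
            intro hcontra
            apply ht
            exact Fin.ext hcontra
          simp [upperFac, htc, htN, hq, hne]
        · simp
      · -- last column, p < N : entry is 1
        have hqN : (q : ℕ) = N := by omega
        -- find p's block
        obtain ⟨k, hk, h1, h2⟩ := exists_block h hr (by rwa [hpSr])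
        have hSkN : pS h k < N := by
          rw [← hpSr]
          exact pS_strict h hh hk hk
        rw [show (lowerFac r N h p (Fin.last N)) * (upperFac r s N h (Fin.last N) q) = 0 by
          simp [lowerFac, hp, Fin.val_last]]
        rw [add_zero]
        rw [Finset.sum_eq_single (⟨pS h k, hSkN⟩ : Fin N)]
        · have hSk2 : pS h k < pS h (k + 1) := pS_strict h hh hk (by omega)
          rw [pS_succ h hk] at h2 hSk2
          have hsb : sameBlock h (p : ℕ) (pS h k) :=
            (sameBlock_iff h _ _).2 ⟨k, hk, h1, h2, le_refl _, hSk2⟩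
          have hst : isStart h (pS h k) := ⟨k, hk, rfl⟩
          have e1 : starMatrix r s N h p q = 1 := by
            simp [starMatrix, hp, hq]
          have e2 : lowerFac r N h p (Fin.castSucc ⟨pS h k, hSkN⟩) = 1 := by
            simp only [lowerFac, Matrix.of_apply, Fin.coe_castSucc]
            rw [if_pos hp, if_pos hSkN, if_pos ⟨hsb, h1⟩]
          have e3 : upperFac r s N h (Fin.castSucc ⟨pS h k, hSkN⟩) q = 1 := by
            simp only [upperFac, Matrix.of_apply, Fin.coe_castSucc]
            rw [if_pos hSkN, if_neg hq, if_pos hst]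
          rw [e1, e2, e3]
          norm_num
        · intro t _ ht
          have htN : (t : ℕ) < N := t.isLt
          by_cases hst : isStart h (t : ℕ)
          · -- t is a start; if also sameBlock p t ∧ t ≤ p then t = pS h k, contradiction
            by_cases hsb : sameBlock h (p : ℕ) (t : ℕ) ∧ (t : ℕ) ≤ (p : ℕ)
            · exfalso
              obtain ⟨j, hjr, hjt⟩ := hst
              obtain ⟨k', hk', a1, a2, a3, a4⟩ := (sameBlock_iff h _ _).1 hsb.1
              have hkk' : k = k' := by
                apply block_unique h hh hk hk' h1 h2 a1
                rw [pS_succ h hk']; exact a2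
              -- t = pS h j lies in block k', so j = k'
              have hjk' : j = k' := by
                refine block_unique h hh (p := (t : ℕ)) hjr hk' hjt.ge ?_ a3 ?_
                · rw [pS_succ h hjr]
                  have := hh ⟨j, hjr⟩
                  omega
                · rw [pS_succ h hk']; exact a4
              apply ht
              apply Fin.ext
              show (t : ℕ) = pS h k
              rw [hjt, hjk', hkk']
            · have e2 : lowerFac r N h p (Fin.castSucc t) = 0 := by
                simp only [lowerFac, Matrix.of_apply, Fin.coe_castSucc]
                rw [if_pos hp, if_pos htN, if_neg hsb]
              rw [e2, zero_mul]
          · simp [upperFac, htN, hq, hst]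
        · simp
    · have hpN : (p : ℕ) = N := by omega
      by_cases hq : (q : ℕ) < N
      · -- last row, q < N : entry is -1
        rw [Finset.sum_eq_single (⟨(q : ℕ), hq⟩ : Fin N)]
        · have : ¬ ((Fin.last N : Fin (N + 1)) : ℕ) < N := by simp
          simp [starMatrix, lowerFac, upperFac, hp, hq, Fin.val_last]
        · intro t _ ht
          have htN : (t : ℕ) < N := t.isLt
          have hne : (t : ℕ) ≠ (q : ℕ) := fun hc => ht (Fin.ext hc)
          simp [upperFac, htN, hq, hne]
        · simp
      · -- corner: -(number of starts) + (r+s+1) = s+1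
        have hqN : (q : ℕ) = N := by omega
        have hsum : ∑ t : Fin N, lowerFac r N h p (Fin.castSucc t) *
            upperFac r s N h (Fin.castSucc t) q
            = ∑ t : Fin N, (if isStart h (t : ℕ) then (-1 : ℤ) else 0) := by
          apply Finset.sum_congr rfl
          intro t _
          have htN : (t : ℕ) < N := t.isLt
          by_cases hst : isStart h (t : ℕ) <;>
            simp [lowerFac, upperFac, hp, hq, htN, hst]
        rw [hsum]
        have hcount : ∑ t : Fin N, (if isStart h (t : ℕ) then (-1 : ℤ) else 0)
            = -(r : ℤ) := by
          rw [← Finset.sum_filter, Finset.sum_const]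
          have hcard : (Finset.univ.filter fun t : Fin N => isStart h (t : ℕ)).card = r := by
            have himg : (Finset.univ.filter fun t : Fin N => isStart h (t : ℕ))
                = Finset.image (fun k : Fin r => (⟨pS h k.val, by
                    rw [← hpSr]; exact pS_strict h hh k.isLt k.isLt⟩ : Fin N))
                  Finset.univ := by
              ext t
              simp only [Finset.mem_filter, Finset.mem_univ, true_and, Finset.mem_image]
              constructor
              · rintro ⟨k, hk, hkt⟩
                exact ⟨⟨k, hk⟩, Fin.ext hkt.symm⟩
              · rintro ⟨k, hkt⟩
                exact ⟨k.val, k.isLt, by rw [← hkt]⟩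
            rw [himg, Finset.card_image_of_injective _ ?_, Finset.card_univ, Fintype.card_fin]
            intro a b hab
            have : pS h a.val = pS h b.val := congrArg Fin.val hab
            by_contra hne
            rcases lt_trichotomy a b with hlt | heq | hgt
            · exact absurd this (Nat.ne_of_lt (pS_strict h hh a.isLt hlt))
            · exact hne heq
            · exact absurd this.symm (Nat.ne_of_lt (pS_strict h hh b.isLt hgt))
          rw [hcard]
          simp
        rw [hcount]
        simp [starMatrix, lowerFac, upperFac, hp, hq, hpN, hqN, Fin.val_last]
        ring
  rw [hfac, Matrix.det_mul]
  -- determinant of the lower factor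
  have hdetL : (lowerFac r N h).det = 1 := by
    rw [Matrix.det_of_lowerTriangular]
    · rw [Finset.prod_eq_one]
      intro p _
      by_cases hp : (p : ℕ) < N
      · simp [lowerFac, hp, hself (p : ℕ) hp]
      · simp [lowerFac, hp]
    · intro p q hpq
      have hqp : (p : ℕ) < (q : ℕ) := hpq
      by_cases hp : (p : ℕ) < N
      · have hq : (q : ℕ) < N ∨ (q : ℕ) = N := by omega
        rcases hq with hq | hq
        · simp only [lowerFac, Matrix.of_apply, hp, hq, if_true]
          rw [if_neg]
          rintro ⟨_, hle⟩
          omega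
        · simp [lowerFac, hp, hq]
      · omega
  -- determinant of the upper factor
  have hdetU : (upperFac r s N h).det = (r : ℤ) + s + 1 := by
    rw [Matrix.det_of_upperTriangular]
    · rw [show (Finset.univ : Finset (Fin (N + 1))) = insert (Fin.last N)
          (Finset.univ.filter fun p : Fin (N + 1) => (p : ℕ) < N) from ?_]
      · rw [Finset.prod_insert (by simp)]
        rw [show upperFac r s N h (Fin.last N) (Fin.last N) = (r : ℤ) + s + 1 by
          simp [upperFac, Fin.val_last]]
        rw [Finset.prod_eq_one]
        · ring
        · intro p hp
          simp only [Finset.mem_filter] at hp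
          simp [upperFac, hp.2]
      · ext p
        simp only [Finset.mem_insert, Finset.mem_filter, Finset.mem_univ, true_and]
        constructor
        · intro _
          by_cases hp : (p : ℕ) < N
          · exact Or.inr hp
          · exact Or.inl (Fin.ext (by omega : (p : ℕ) = N))
        · intro _; trivial
    · intro p q hpq
      have hqp : (q : ℕ) < (p : ℕ) := hpq
      by_cases hp : (p : ℕ) < N
      · have hq : (q : ℕ) < N := by omega
        simp only [upperFac, Matrix.of_apply, hp, hq, if_true]
        rw [if_neg]
        omega
      · have hq : (q : ℕ) < N := by omega
        simp [upperFac, hp, hq]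
  rw [hdetL, hdetU, one_mul]
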